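/- Let G = (V,E) be a locally finite graph, α ∈ (0,1) and q : V → ℝ a potential of class K_α. Then the following are equivalent: (i) there are a, k ≥ 0 such that (G,q) is (a,k)-sparse; (ii) there are ã ∈ (0,1) and k̃ ≥ 0 such that for all finitely supported f : V → ℂ, (1−ã)(Q_deg(f) + Q_q(f)) − k̃·‖f‖² ≤ Q_Δ(f) + Q_q(f) ≤ (1+ã)(Q_deg(f) + Q_q(f)) + k̃·‖f‖²; (iii) there are ã ∈ (0,1) and k̃ ≥ 0 such that for all finitely supported f : V → ℂ, (1−ã)(Q_deg(f) + Q_q(f)) − k̃·‖f‖² ≤ Q_Δ(f) + Q_q(f). -/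

import Mathlib

open scoped BigOperators

noncomputable section

variable {V : Type*} [DecidableEq V] (G : SimpleGraph V) [DecidableRel G.Adj]

/-- The squared `ℓ²`-norm `‖f‖² = ∑_x |f x|²` of a (finitely supported) function. -/
def qNormSq (f : V → ℂ) : ℝ := ∑' x, ‖f x‖ ^ 2

/-- The quadratic form of the Laplacian:
`Q_Δ(f) = (1/2) ∑_{x ~ y} |f x - f y|²` (sum over ordered pairs of adjacent vertices). -/
def qLap (f : V → ℂ) : ℝ :=
  (1 / 2) * ∑' (x : V), ∑' (y : V), if G.Adj x y then ‖f x - f y‖ ^ 2 else 0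

/-- The magnetic quadratic form
`Q_θ(f) = (1/2) ∑_{x ~ y} |f x - e^{iθ(x,y)} f y|²`. -/
def qMag (θ : V → V → ℝ) (f : V → ℂ) : ℝ :=
  (1 / 2) * ∑' (x : V), ∑' (y : V),
    if G.Adj x y then ‖f x - Complex.exp (Complex.I * (θ x y)) * f y‖ ^ 2 else 0

/-- The quadratic form of a potential: `Q_q(f) = ∑_x q x * |f x|²`. -/
def qPot (q : V → ℝ) (f : V → ℂ) : ℝ := ∑' x, q x * ‖f x‖ ^ 2

variable [G.LocallyFinite]

/-- The quadratic form of the degree: `Q_deg(f) = ∑_x deg x * |f x|²`. -/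
def qDeg (f : V → ℂ) : ℝ := ∑' x, (G.degree x : ℝ) * ‖f x‖ ^ 2

/-- Twice the number of undirected edges of the subgraph induced on `W`,
i.e. the number of ordered pairs of adjacent vertices in `W × W`. -/
def edgesTwice (W : Finset V) : ℕ := ((W ×ˢ W).filter fun p => G.Adj p.1 p.2).card

/-- The cardinality `|∂W|` of the edge boundary of `W`. -/
def bdryCard (W : Finset V) : ℕ :=
  ∑ x ∈ W, ((G.neighborFinset x).filter fun y => y ∉ W).card

/-- `(G, q)` is `(a,k)`-sparse: `2|E_W| ≤ k|W| + a(|∂W| + q₊(W))` for all finite `W`. -/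
def IsSparse (q : V → ℝ) (a k : ℝ) : Prop :=
  ∀ W : Finset V,
    (edgesTwice G W : ℝ) ≤ k * W.card + a * ((bdryCard G W : ℝ) + ∑ x ∈ W, max (q x) 0)

/-- The potential `q` belongs to the class `K_α`:
`Q_{q₋}(f) ≤ α (Q_Δ(f) + Q_{q₊}(f)) + C ‖f‖²` for all finitely supported `f`. -/
def KClass (q : V → ℝ) (α : ℝ) : Prop :=
  ∃ C : ℝ, 0 ≤ C ∧ ∀ f : V → ℂ, (Function.support f).Finite →
    qPot (fun x => max (-q x) 0) f ≤
      α * (qLap G f + qPot (fun x => max (q x) 0) f) + C * qNormSq f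

/-- The potential `q` belongs to the magnetic class `K_α^θ`:
`Q_{q₋}(f) ≤ α (Q_θ(f) + Q_{q₊}(f)) + C ‖f‖²` for all finitely supported `f`. -/
def KClassTheta (θ : V → V → ℝ) (q : V → ℝ) (α : ℝ) : Prop :=
  ∃ C : ℝ, 0 ≤ C ∧ ∀ f : V → ℂ, (Function.support f).Finite →
    qPot (fun x => max (-q x) 0) f ≤
      α * (qMag G θ f + qPot (fun x => max (q x) 0) f) + C * qNormSq f

/-- The Cheeger (isoperimetric) constant of `U ⊆ V`:
the infimum over nonempty finite `W ⊆ U` of `(|∂W| + q(W)) / (deg(W) + q(W))`,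
with the convention that the quotient is `0` when the denominator vanishes. -/
def cheeger (q : V → ℝ) (U : Set V) : ℝ :=
  ⨅ W : {W : Finset V // ↑W ⊆ U ∧ W.Nonempty},
    if (∑ x ∈ W.1, ((G.degree x : ℝ) + q x)) = 0 then 0
    else ((bdryCard G W.1 : ℝ) + ∑ x ∈ W.1, q x) / ∑ x ∈ W.1, ((G.degree x : ℝ) + q x)

/-- The Cheeger constant at infinity: `α_∞ = sup over finite K of α_{V∖K}`. -/
def cheegerInfty (q : V → ℝ) : ℝ :=
  ⨆ K : Finset V, cheeger G q ((↑K : Set V)ᶜ)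

section Aux
set_option linter.unusedSectionVars false
variable {V : Type*} [DecidableEq V] (G : SimpleGraph V) [DecidableRel G.Adj] [G.LocallyFinite]

/-- `T` is a good ambient finset for `f`: it contains the support and all its neighbors. -/
def GoodT {α : Type*} [Zero α] (T : Finset V) (f : V → α) : Prop :=
  ∀ x, f x ≠ 0 → x ∈ T ∧ ∀ y, G.Adj x y → y ∈ T

lemma goodT_exists (f : V → ℂ) (hf : (Function.support f).Finite) :
    ∃ T : Finset V, GoodT G T f := by
  classical
  refine ⟨hf.toFinset ∪ hf.toFinset.biUnion (fun x => G.neighborFinset x), ?_⟩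
  intro x hx
  have hxS : x ∈ hf.toFinset := by simpa using hx
  refine ⟨Finset.mem_union_left _ hxS, fun y hy => ?_⟩
  exact Finset.mem_union_right _ (Finset.mem_biUnion.2 ⟨x, hxS, by simpa [SimpleGraph.mem_neighborFinset] using hy⟩)

lemma qNormSq_eq (f : V → ℂ) {T : Finset V} (hT : GoodT G T f) :
    qNormSq f = ∑ x ∈ T, ‖f x‖ ^ 2 := by
  refine tsum_eq_sum (fun x hx => ?_)
  by_contra h
  have : f x ≠ 0 := by
    intro h0; simp [h0] at h
  exact hx (hT x this).1

lemma qPot_eq (w : V → ℝ) (f : V → ℂ) {T : Finset V} (hT : GoodT G T f) :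
    qPot w f = ∑ x ∈ T, w x * ‖f x‖ ^ 2 := by
  refine tsum_eq_sum (fun x hx => ?_)
  by_contra h
  have : f x ≠ 0 := by
    intro h0; simp [h0] at h
  exact hx (hT x this).1

lemma qDeg_eq (f : V → ℂ) {T : Finset V} (hT : GoodT G T f) :
    qDeg G f = ∑ x ∈ T, (G.degree x : ℝ) * ‖f x‖ ^ 2 := by
  refine tsum_eq_sum (fun x hx => ?_)
  by_contra h
  have : f x ≠ 0 := by
    intro h0; simp [h0] at h
  exact hx (hT x this).1

lemma qLap_eq (f : V → ℂ) {T : Finset V} (hT : GoodT G T f) :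
    qLap G f = (1/2) * ∑ x ∈ T, ∑ y ∈ T, (if G.Adj x y then ‖f x - f y‖ ^ 2 else 0) := by
  unfold qLap
  congr 1
  have key : ∀ x, ∑' (y : V), (if G.Adj x y then ‖f x - f y‖ ^ 2 else 0)
      = ∑ y ∈ T, (if G.Adj x y then ‖f x - f y‖ ^ 2 else 0) := by
    intro x
    refine tsum_eq_sum (fun y hy => ?_)
    by_cases hadj : G.Adj x y
    · have hfy : f y = 0 := by
        by_contra h
        exact hy (hT y h).1
      have hfx : f x = 0 := by
        by_contra h
        exact hy ((hT x h).2 y hadj)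
      simp [hadj, hfx, hfy]
    · simp [hadj]
  calc ∑' (x : V), ∑' (y : V), (if G.Adj x y then ‖f x - f y‖ ^ 2 else 0)
      = ∑' (x : V), ∑ y ∈ T, (if G.Adj x y then ‖f x - f y‖ ^ 2 else 0) := by
        exact tsum_congr key
    _ = ∑ x ∈ T, ∑ y ∈ T, (if G.Adj x y then ‖f x - f y‖ ^ 2 else 0) := by
        refine tsum_eq_sum (fun x hx => ?_)
        refine Finset.sum_eq_zero (fun y hyT => ?_)
        by_cases hadj : G.Adj x y
        · have hfy : f y = 0 := by
            by_contra h
            exact hx ((hT y h).2 x (G.adj_symm hadj))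
          have hfx : f x = 0 := by
            by_contra h
            exact hx (hT x h).1
          simp [hadj, hfx, hfy]
        · simp [hadj]

end Aux
set_option linter.unusedSectionVars false
lemma filter_adj_card {T : Finset V} {x : V} (hx : ∀ y, G.Adj x y → y ∈ T) :
    (T.filter (fun y => G.Adj x y)).card = G.degree x := by
  have : T.filter (fun y => G.Adj x y) = G.neighborFinset x := by
    ext y
    simp only [Finset.mem_filter, SimpleGraph.mem_neighborFinset]
    exact ⟨fun h => h.2, fun h => ⟨hx y h, h⟩⟩
  rw [this, SimpleGraph.card_neighborFinset_eq_degree]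

lemma bdry_count {W T : Finset V} (hWT : W ⊆ T)
    (hnb : ∀ x ∈ W, ∀ y, G.Adj x y → y ∈ T) :
    ∑ x ∈ T, ∑ y ∈ T, (if G.Adj x y ∧ x ∈ W ∧ y ∉ W then (1:ℝ) else 0)
      = bdryCard G W := by
  rw [bdryCard]
  push_cast
  rw [← Finset.sum_subset hWT (by
    intro x hxT hxW
    refine Finset.sum_eq_zero (fun y hy => ?_)
    simp [hxW])]
  refine Finset.sum_congr rfl (fun x hxW => ?_)
  have hsub : G.neighborFinset x ⊆ T := by
    intro y hy
    exact hnb x hxW y (by simpa [SimpleGraph.mem_neighborFinset] using hy)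
  rw [Finset.card_filter]
  push_cast
  rw [← Finset.sum_subset hsub (by
    intro y hyT hynb
    have : ¬ G.Adj x y := by simpa [SimpleGraph.mem_neighborFinset] using hynb
    simp [this])]
  refine Finset.sum_congr rfl (fun y hy => ?_)
  have hadj : G.Adj x y := by simpa [SimpleGraph.mem_neighborFinset] using hy
  simp [hadj, hxW]

lemma bdry_count' {W T : Finset V} (hWT : W ⊆ T)
    (hnb : ∀ x ∈ W, ∀ y, G.Adj x y → y ∈ T) :
    ∑ x ∈ T, ∑ y ∈ T, (if G.Adj x y ∧ x ∉ W ∧ y ∈ W then (1:ℝ) else 0)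
      = bdryCard G W := by
  rw [Finset.sum_comm, ← bdry_count G hWT hnb]
  refine Finset.sum_congr rfl (fun y _ => Finset.sum_congr rfl (fun x _ => ?_))
  by_cases h : G.Adj x y
  · have h' : G.Adj y x := G.adj_symm h
    by_cases hx : x ∈ W <;> by_cases hy : y ∈ W <;> simp [h, h', hx, hy]
  · have h' : ¬ G.Adj y x := fun hc => h (G.adj_symm hc)
    simp [h, h']

lemma degsum_eq (W : Finset V) :
    ∑ x ∈ W, G.degree x = edgesTwice G W + bdryCard G W := by
  rw [edgesTwice, bdryCard, Finset.card_filter, Finset.sum_product, ← Finset.sum_add_distrib]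
  refine Finset.sum_congr rfl (fun x hxW => ?_)
  have e1 : W.filter (fun y => G.Adj x y) = (G.neighborFinset x).filter (fun y => y ∈ W) := by
    ext y
    simp only [Finset.mem_filter, SimpleGraph.mem_neighborFinset]
    tauto
  have h1 : (∑ y ∈ W, if G.Adj x y then 1 else 0)
      = ((G.neighborFinset x).filter (fun y => y ∈ W)).card := by
    rw [← e1, ← Finset.card_filter]
  rw [h1, ← SimpleGraph.card_neighborFinset_eq_degree]
  exact (Finset.card_filter_add_card_filter_not (fun y => y ∈ W)).symm
set_option linter.unusedSectionVars false

section Ind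
variable (W : Finset V)

/-- indicator of `W` -/
def indW : V → ℂ := fun x => if x ∈ W then 1 else 0

lemma indW_supp : (Function.support (indW W)).Finite := by
  apply Set.Finite.subset W.finite_toSet
  intro x hx
  simp only [Function.mem_support] at hx
  rw [Finset.mem_coe]
  by_contra h
  exact hx (by simp [indW, h])

lemma indW_good : ∃ T : Finset V, GoodT G T (indW W) := goodT_exists G _ (indW_supp W)

lemma indW_normSq : qNormSq (indW W) = W.card := by
  rw [show qNormSq (indW W) = ∑ x ∈ W, ‖indW W x‖^2 from tsum_eq_sum (by
    intro x hx; simp [indW, hx])]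
  rw [show ∑ x ∈ W, ‖indW W x‖^2 = ∑ x ∈ W, (1:ℝ) from
    Finset.sum_congr rfl (fun x hx => by simp [indW, hx])]
  simp

lemma indW_pot (w : V → ℝ) : qPot w (indW W) = ∑ x ∈ W, w x := by
  rw [show qPot w (indW W) = ∑ x ∈ W, w x * ‖indW W x‖^2 from tsum_eq_sum (by
    intro x hx; simp [indW, hx])]
  refine Finset.sum_congr rfl (fun x hx => by simp [indW, hx])

lemma indW_deg : qDeg G (indW W) = ∑ x ∈ W, (G.degree x : ℝ) := by
  rw [show qDeg G (indW W) = ∑ x ∈ W, (G.degree x : ℝ) * ‖indW W x‖^2 from tsum_eq_sum (by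
    intro x hx; simp [indW, hx])]
  refine Finset.sum_congr rfl (fun x hx => by simp [indW, hx])

lemma indW_lap : qLap G (indW W) = bdryCard G W := by
  obtain ⟨T, hT⟩ := indW_good G W
  have hWT : W ⊆ T := by
    intro x hx
    exact (hT x (by simp [indW, hx])).1
  have hnb : ∀ x ∈ W, ∀ y, G.Adj x y → y ∈ T := by
    intro x hx y hy
    exact (hT x (by simp [indW, hx])).2 y hy
  rw [qLap_eq G _ hT]
  have key : ∀ x ∈ T, ∀ y ∈ T, (if G.Adj x y then ‖indW W x - indW W y‖ ^ 2 else 0)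
      = (if G.Adj x y ∧ x ∈ W ∧ y ∉ W then (1:ℝ) else 0)
        + (if G.Adj x y ∧ x ∉ W ∧ y ∈ W then (1:ℝ) else 0) := by
    intro x _ y _
    by_cases h : G.Adj x y
    · by_cases hx : x ∈ W <;> by_cases hy : y ∈ W <;>
        simp [indW, h, hx, hy]
    · simp [h]
  calc (1/2) * ∑ x ∈ T, ∑ y ∈ T, (if G.Adj x y then ‖indW W x - indW W y‖ ^ 2 else 0)
      = (1/2) * ((∑ x ∈ T, ∑ y ∈ T, (if G.Adj x y ∧ x ∈ W ∧ y ∉ W then (1:ℝ) else 0))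
          + ∑ x ∈ T, ∑ y ∈ T, (if G.Adj x y ∧ x ∉ W ∧ y ∈ W then (1:ℝ) else 0)) := by
        rw [← Finset.sum_add_distrib]
        congr 1
        refine Finset.sum_congr rfl (fun x hx => ?_)
        rw [← Finset.sum_add_distrib]
        exact Finset.sum_congr rfl (fun y hy => key x hx y hy)
    _ = (bdryCard G W : ℝ) := by
        rw [bdry_count G hWT hnb, bdry_count' G hWT hnb]; ring

end Ind
lemma lower_imp_sparse (q : V → ℝ) {ta tk : ℝ} (hta0 : 0 < ta) (hta1 : ta < 1) (htk : 0 ≤ tk)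
    (hlow : ∀ f : V → ℂ, (Function.support f).Finite →
      (1 - ta) * (qDeg G f + qPot q f) - tk * qNormSq f ≤ qLap G f + qPot q f) :
    ∃ a k : ℝ, 0 ≤ a ∧ 0 ≤ k ∧ IsSparse G q a k := by
  refine ⟨ta / (1 - ta), tk / (1 - ta), ?_, ?_, ?_⟩
  · exact div_nonneg (le_of_lt hta0) (by linarith)
  · exact div_nonneg htk (by linarith)
  intro W
  have h := hlow (indW W) (indW_supp W)
  rw [indW_normSq, indW_pot, indW_deg, indW_lap] at h
  have hdeg : (∑ x ∈ W, (G.degree x : ℝ)) = (edgesTwice G W : ℝ) + (bdryCard G W : ℝ) := by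
    rw [← Nat.cast_sum, degsum_eq]
    push_cast; ring
  rw [hdeg] at h
  have hPq : (∑ x ∈ W, q x) ≤ ∑ x ∈ W, max (q x) 0 :=
    Finset.sum_le_sum (fun x _ => le_max_left _ _)
  have h1ta : (0:ℝ) < 1 - ta := by linarith
  -- key : (1 - ta) * edgesTwice ≤ ta * (bdry + q₊(W)) + tk * card
  have key : (1 - ta) * (edgesTwice G W : ℝ)
      ≤ ta * ((bdryCard G W : ℝ) + ∑ x ∈ W, max (q x) 0) + tk * W.card := by
    nlinarith [h, hPq]
  rw [div_mul_eq_mul_div, div_mul_eq_mul_div, ← add_div, le_div_iff₀ h1ta]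
  nlinarith [key]
lemma coarea_aux {q : V → ℝ} {a k : ℝ} (hsp : IsSparse G q a k) (ha : 0 ≤ a)
    (T : Finset V) (n : ℕ) :
    ∀ h : V → ℝ, (∀ x, 0 ≤ h x) → GoodT G T h →
      (T.filter (fun x => h x ≠ 0)).card ≤ n →
      ∑ x ∈ T, (G.degree x : ℝ) * h x ≤
        k * ∑ x ∈ T, h x
        + (1 + a) * ((1/2) * ∑ x ∈ T, ∑ y ∈ T, (if G.Adj x y then |h x - h y| else 0))
        + a * ∑ x ∈ T, max (q x) 0 * h x := by
  induction n with
  | zero =>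
    intro h h0 hG hcard
    have hz : ∀ x ∈ T, h x = 0 := by
      intro x hx
      by_contra hne
      have : x ∈ T.filter (fun x => h x ≠ 0) := Finset.mem_filter.2 ⟨hx, hne⟩
      simp [Finset.card_eq_zero.1 (Nat.le_zero.1 hcard)] at this
    have e1 : ∑ x ∈ T, (G.degree x : ℝ) * h x = 0 :=
      Finset.sum_eq_zero (fun x hx => by rw [hz x hx]; ring)
    have e2 : ∑ x ∈ T, h x = 0 := Finset.sum_eq_zero hz
    have e3 : ∑ x ∈ T, max (q x) 0 * h x = 0 :=
      Finset.sum_eq_zero (fun x hx => by rw [hz x hx]; ring)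
    have e4 : ∑ x ∈ T, ∑ y ∈ T, (if G.Adj x y then |h x - h y| else 0) = 0 :=
      Finset.sum_eq_zero (fun x hx => Finset.sum_eq_zero (fun y hy => by
        rw [hz x hx, hz y hy]; simp))
    rw [e1, e2, e3, e4]; simp
  | succ n ih =>
    intro h h0 hG hcard
    by_cases hc : (T.filter (fun x => h x ≠ 0)).card ≤ n
    · exact ih h h0 hG hc
    set W := T.filter (fun x => h x ≠ 0) with hW
    have hWT : W ⊆ T := Finset.filter_subset _ _
    have hWne : W.Nonempty := by
      rw [← Finset.card_pos]; omega
    have hWpos : ∀ x ∈ W, 0 < h x := by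
      intro x hx
      have := (Finset.mem_filter.1 hx).2
      exact lt_of_le_of_ne (h0 x) (Ne.symm this)
    have himg : (W.image h).Nonempty := hWne.image h
    set m := (W.image h).min' himg with hm
    obtain ⟨x₀, hx₀W, hx₀⟩ := Finset.mem_image.1 ((W.image h).min'_mem himg)
    have hmpos : 0 < m := by rw [hm, ← hx₀]; exact hWpos x₀ hx₀W
    have hmle : ∀ x ∈ W, m ≤ h x := fun x hx =>
      (W.image h).min'_le (h x) (Finset.mem_image_of_mem h hx)
    set h' : V → ℝ := fun x => if x ∈ W then h x - m else 0 with hh'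
    have h'0 : ∀ x, 0 ≤ h' x := by
      intro x
      by_cases hx : x ∈ W
      · simp only [hh', hx, if_pos]
        linarith [hmle x hx]
      · simp [hh', hx]
    have h'W : ∀ x, h' x ≠ 0 → x ∈ W := by
      intro x hx
      by_contra hc'
      simp [hh', hc'] at hx
    have h'G : GoodT G T h' := by
      intro x hx
      exact hG x (Finset.mem_filter.1 (h'W x hx)).2
    have h'card : (T.filter (fun x => h' x ≠ 0)).card ≤ n := by
      have hsub : T.filter (fun x => h' x ≠ 0) ⊆ W.erase x₀ := by
        intro x hx
        have hxW := h'W x (Finset.mem_filter.1 hx).2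
        refine Finset.mem_erase.2 ⟨?_, hxW⟩
        intro hxx
        have : h' x = 0 := by
          simp only [hh', hxW, if_pos]
          rw [hxx, hx₀]; ring
        exact (Finset.mem_filter.1 hx).2 this
      have := Finset.card_le_card hsub
      have hWcard : W.card ≤ n + 1 := hcard
      have := Finset.card_erase_le (s := W) (a := x₀)
      have hcc := Finset.card_erase_of_mem hx₀W
      omega
    -- zero off W (within T)
    have hzT : ∀ x ∈ T, x ∉ W → h x = 0 := by
      intro x hxT hxW
      by_contra hne
      exact hxW (Finset.mem_filter.2 ⟨hxT, hne⟩)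
    have hdiff : ∀ x ∈ T, h x = h' x + (if x ∈ W then m else 0) := by
      intro x hxT
      by_cases hx : x ∈ W
      · simp [hh', hx]
      · simp [hh', hx, hzT x hxT hx]
    -- linear splits
    have split : ∀ c : V → ℝ, ∑ x ∈ T, c x * h x = ∑ x ∈ T, c x * h' x + m * ∑ x ∈ W, c x := by
      intro c
      have : ∀ x ∈ T, c x * h x = c x * h' x + (if x ∈ W then m * c x else 0) := by
        intro x hxT
        rw [hdiff x hxT]
        by_cases hx : x ∈ W <;> simp [hx] <;> ring
      rw [Finset.sum_congr rfl this, Finset.sum_add_distrib]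
      congr 1
      rw [Finset.sum_ite_mem, Finset.inter_eq_right.2 hWT, Finset.mul_sum]
    -- double sum split
    have dsplit : ∑ x ∈ T, ∑ y ∈ T, (if G.Adj x y then |h x - h y| else 0)
        = ∑ x ∈ T, ∑ y ∈ T, (if G.Adj x y then |h' x - h' y| else 0)
          + m * (2 * (bdryCard G W : ℝ)) := by
      have key : ∀ x ∈ T, ∀ y ∈ T, (if G.Adj x y then |h x - h y| else 0)
          = (if G.Adj x y then |h' x - h' y| else 0)
            + (m * if G.Adj x y ∧ x ∈ W ∧ y ∉ W then (1:ℝ) else 0)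
            + (m * if G.Adj x y ∧ x ∉ W ∧ y ∈ W then (1:ℝ) else 0) := by
        intro x hxT y hyT
        by_cases hadj : G.Adj x y
        · by_cases hx : x ∈ W <;> by_cases hy : y ∈ W
          · simp only [hadj, hx, hy, if_pos, hh']
            simp [hx, hy]
          · have hy0 : h y = 0 := hzT y hyT hy
            simp only [hadj, if_pos, hh']
            simp only [hx, hy, if_pos, if_neg, not_false_iff]
            rw [abs_of_nonneg (by linarith [hWpos x hx]),
              abs_of_nonneg (by linarith [hmle x hx])]
            simp [hadj, hx, hy]
            linarith [hzT y hyT hy]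
          · have hx0 : h x = 0 := hzT x hxT hx
            simp only [hadj, if_pos, hh']
            simp only [hx, hy, if_neg, if_pos, not_false_iff]
            rw [abs_sub_comm, abs_sub_comm (0:ℝ)]
            rw [abs_of_nonneg (by linarith [hWpos y hy]),
              abs_of_nonneg (by linarith [hmle y hy])]
            simp [hadj, hx, hy]
            linarith [hx0]
          · have hx0 : h x = 0 := hzT x hxT hx
            have hy0 : h y = 0 := hzT y hyT hy
            simp [hadj, hx, hy, hh', hx0, hy0]
        · simp [hadj]
      calc ∑ x ∈ T, ∑ y ∈ T, (if G.Adj x y then |h x - h y| else 0)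
          = ∑ x ∈ T, ∑ y ∈ T, ((if G.Adj x y then |h' x - h' y| else 0)
              + (m * if G.Adj x y ∧ x ∈ W ∧ y ∉ W then (1:ℝ) else 0)
              + (m * if G.Adj x y ∧ x ∉ W ∧ y ∈ W then (1:ℝ) else 0)) := by
            refine Finset.sum_congr rfl (fun x hx => Finset.sum_congr rfl (fun y hy => key x hx y hy))
        _ = ∑ x ∈ T, ∑ y ∈ T, (if G.Adj x y then |h' x - h' y| else 0)
              + m * (∑ x ∈ T, ∑ y ∈ T, if G.Adj x y ∧ x ∈ W ∧ y ∉ W then (1:ℝ) else 0)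
              + m * (∑ x ∈ T, ∑ y ∈ T, if G.Adj x y ∧ x ∉ W ∧ y ∈ W then (1:ℝ) else 0) := by
            simp only [Finset.sum_add_distrib, ← Finset.mul_sum]
        _ = ∑ x ∈ T, ∑ y ∈ T, (if G.Adj x y then |h' x - h' y| else 0)
              + m * (2 * (bdryCard G W : ℝ)) := by
            rw [bdry_count G hWT (fun x hx y hy => (hG x (Finset.mem_filter.1 hx).2).2 y hy),
              bdry_count' G hWT (fun x hx y hy => (hG x (Finset.mem_filter.1 hx).2).2 y hy)]
            ring
    -- sparse at W
    have hsparse : (∑ x ∈ W, (G.degree x : ℝ))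
        ≤ k * W.card + (1 + a) * (bdryCard G W : ℝ) + a * ∑ x ∈ W, max (q x) 0 := by
      have h1 := hsp W
      have h2 : (∑ x ∈ W, (G.degree x : ℝ)) = (edgesTwice G W : ℝ) + (bdryCard G W : ℝ) := by
        rw [← Nat.cast_sum, degsum_eq]; push_cast; ring
      rw [h2]; linarith
    have IH := ih h' h'0 h'G h'card
    have hm0 : 0 ≤ m := le_of_lt hmpos
    have hs := mul_le_mul_of_nonneg_left hsparse hm0
    have s1 := split (fun x => (G.degree x : ℝ))
    have s2 : ∑ x ∈ T, h x = ∑ x ∈ T, h' x + m * W.card := by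
      have := split (fun _ => (1:ℝ))
      simpa using this
    have s3 := split (fun x => max (q x) 0)
    rw [s1, s2, s3, dsplit]
    nlinarith [IH, hs]
lemma norm_sub_sq_c (u v : ℂ) :
    ‖u - v‖^2 = ‖u‖^2 + ‖v‖^2 - 2 * (u * (starRingEnd ℂ) v).re := by
  simp only [Complex.sq_norm, Complex.normSq_apply,
    Complex.sub_re, Complex.sub_im, Complex.mul_re, Complex.conj_re, Complex.conj_im]
  ring

lemma deg_inner_left {f : V → ℂ} {T : Finset V} (hT : GoodT G T f) :
    ∑ x ∈ T, ∑ y ∈ T, (if G.Adj x y then ‖f x‖^2 else 0)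
      = ∑ x ∈ T, (G.degree x : ℝ) * ‖f x‖^2 := by
  refine Finset.sum_congr rfl (fun x hx => ?_)
  by_cases hfx : f x = 0
  · simp [hfx]
  · rw [← Finset.sum_filter, Finset.sum_const, filter_adj_card G (fun y hy => (hT x hfx).2 y hy)]
    simp [nsmul_eq_mul]

lemma deg_inner_right {f : V → ℂ} {T : Finset V} (hT : GoodT G T f) :
    ∑ x ∈ T, ∑ y ∈ T, (if G.Adj x y then ‖f y‖^2 else 0)
      = ∑ x ∈ T, (G.degree x : ℝ) * ‖f x‖^2 := by
  rw [Finset.sum_comm, ← deg_inner_left G hT]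
  refine Finset.sum_congr rfl (fun y _ => Finset.sum_congr rfl (fun x _ => ?_))
  by_cases h : G.Adj x y
  · simp [h, G.adj_symm h]
  · have h' : ¬ G.Adj y x := fun hc => h (G.adj_symm hc)
    simp [h, h']

lemma lap_eq_deg_sub {f : V → ℂ} {T : Finset V} (hT : GoodT G T f) :
    qLap G f = ∑ x ∈ T, (G.degree x : ℝ) * ‖f x‖^2
      - ∑ x ∈ T, ∑ y ∈ T, (if G.Adj x y then (f x * (starRingEnd ℂ) (f y)).re else 0) := by
  rw [qLap_eq G f hT]
  have key : ∀ x ∈ T, ∀ y ∈ T, (if G.Adj x y then ‖f x - f y‖^2 else 0)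
      = (if G.Adj x y then ‖f x‖^2 else 0) + (if G.Adj x y then ‖f y‖^2 else 0)
        - 2 * (if G.Adj x y then (f x * (starRingEnd ℂ) (f y)).re else 0) := by
    intro x _ y _
    by_cases h : G.Adj x y
    · simp only [h, if_pos]
      rw [norm_sub_sq_c]
    · simp [h]
  calc (1/2) * ∑ x ∈ T, ∑ y ∈ T, (if G.Adj x y then ‖f x - f y‖^2 else 0)
      = (1/2) * ((∑ x ∈ T, ∑ y ∈ T, (if G.Adj x y then ‖f x‖^2 else 0))
          + (∑ x ∈ T, ∑ y ∈ T, (if G.Adj x y then ‖f y‖^2 else 0))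
          - 2 * ∑ x ∈ T, ∑ y ∈ T, (if G.Adj x y then (f x * (starRingEnd ℂ) (f y)).re else 0)) := by
        congr 1
        calc ∑ x ∈ T, ∑ y ∈ T, (if G.Adj x y then ‖f x - f y‖^2 else 0)
            = ∑ x ∈ T, ∑ y ∈ T, ((if G.Adj x y then ‖f x‖^2 else 0)
                + (if G.Adj x y then ‖f y‖^2 else 0)
                - 2 * (if G.Adj x y then (f x * (starRingEnd ℂ) (f y)).re else 0)) :=
              Finset.sum_congr rfl (fun x hx => Finset.sum_congr rfl (fun y hy => key x hx y hy))
          _ = _ := by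
              simp only [Finset.sum_sub_distrib, Finset.sum_add_distrib, ← Finset.mul_sum]
    _ = _ := by
        rw [deg_inner_left G hT, deg_inner_right G hT]; ring
lemma final_arith {D N P M s a k α C δ R' : ℝ}
    (hδ0 : 0 < δ) (hδhalf : δ ≤ 1/2) (hδ1 : δ*(2*(1+a)^2) ≤ 1-α) (hδ2 : δ*(4*a+1) ≤ 1-α)
    (ha : 0 ≤ a) (hk : 0 ≤ k) (hα0 : 0 < α) (hα1 : α < 1) (hC : 0 ≤ C)
    (hN0 : 0 ≤ N) (hP0 : 0 ≤ P) (hs0 : 0 ≤ s)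
    (hA : D ≤ 2*k*N + 2*(1+a)^2*s + 2*a*P) (hB : M ≤ α*(s+P) + C*N)
    (hRs : R' ≤ D - s) :
    R' ≤ (1-δ)*(D + (P - M)) + (2*k*δ + C)*N := by
  have ht0 : (0:ℝ) ≤ 1 - δ := by linarith
  have p1 : δ * D ≤ δ * (2*k*N + 2*(1+a)^2*s + 2*a*P) :=
    mul_le_mul_of_nonneg_left hA (le_of_lt hδ0)
  have p2 : δ * (2*(1+a)^2) * s ≤ (1-α) * s := mul_le_mul_of_nonneg_right hδ1 hs0
  have p3 : (δ * (2*a)) * P ≤ ((1-δ) * (1-α)) * P := by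
    refine mul_le_mul_of_nonneg_right ?_ hP0
    nlinarith [hδ2, hδhalf, hδ0, ha,
      mul_le_mul_of_nonneg_right (show (1:ℝ)/2 ≤ 1-δ by linarith)
        (show (0:ℝ) ≤ 1-α by linarith)]
  have p4 : (1-δ) * M ≤ (1-δ) * (α * (s + P) + C * N) := mul_le_mul_of_nonneg_left hB ht0
  have p6 : 0 ≤ δ * α * s := mul_nonneg (mul_nonneg hδ0.le hα0.le) hs0
  have p7 : 0 ≤ δ * C * N := mul_nonneg (mul_nonneg hδ0.le hC) hN0
  nlinarith [p1, p2, p3, p4, p6, p7, hRs]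

set_option maxHeartbeats 1000000 in
lemma young_pt (c p r : ℝ) (hc : 1 ≤ c) (hp : 0 ≤ p) (hr : 0 ≤ r) :
    2*c*|p^2 - r^2| ≤ 2*c^2*(p-r)^2 + (p^2 + r^2) := by
  rcases abs_cases (p^2 - r^2) with ⟨he, _⟩ | ⟨he, _⟩ <;> rw [he] <;>
    nlinarith [sq_nonneg (2*c*(p-r) - (p+r)), sq_nonneg (2*c*(p-r) + (p+r)),
      sq_nonneg (p-r), sq_nonneg (p+r), mul_nonneg hp hr]

lemma sparse_imp_est {q : V → ℝ} {a k α C : ℝ} (hsp : IsSparse G q a k)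
    (ha : 0 ≤ a) (hk : 0 ≤ k) (hα0 : 0 < α) (hα1 : α < 1) (hC : 0 ≤ C)
    (hqC : ∀ f : V → ℂ, (Function.support f).Finite →
      qPot (fun x => max (-q x) 0) f ≤
        α * (qLap G f + qPot (fun x => max (q x) 0) f) + C * qNormSq f) :
    ∃ ta tk : ℝ, 0 < ta ∧ ta < 1 ∧ 0 ≤ tk ∧
      ∀ f : V → ℂ, (Function.support f).Finite →
        |qLap G f - qDeg G f| ≤ ta * (qDeg G f + qPot q f) + tk * qNormSq f := by
  have hc0 : (0:ℝ) < 1 + a := by linarith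
  obtain ⟨δ, hδ0, hδhalf, hδ1, hδ2⟩ :
      ∃ δ : ℝ, 0 < δ ∧ δ ≤ 1/2 ∧ δ * (2*(1+a)^2) ≤ 1 - α ∧ δ * (4*a+1) ≤ 1 - α := by
    refine ⟨min (min ((1-α)/(2*(1+a)^2)) ((1-α)/(4*a+1))) (1/2), ?_, min_le_right _ _, ?_, ?_⟩
    · refine lt_min (lt_min ?_ ?_) (by norm_num)
      · exact div_pos (by linarith) (by positivity)
      · exact div_pos (by linarith) (by linarith)
    · have h1 : min (min ((1-α)/(2*(1+a)^2)) ((1-α)/(4*a+1))) (1/2) ≤ (1-α)/(2*(1+a)^2) :=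
        le_trans (min_le_left _ _) (min_le_left _ _)
      rw [le_div_iff₀ (by positivity)] at h1
      exact h1
    · have h1 : min (min ((1-α)/(2*(1+a)^2)) ((1-α)/(4*a+1))) (1/2) ≤ (1-α)/(4*a+1) :=
        le_trans (min_le_left _ _) (min_le_right _ _)
      rw [le_div_iff₀ (by linarith)] at h1
      exact h1
  refine ⟨1 - δ, 2*k*δ + C, by linarith, by linarith, by nlinarith [mul_nonneg hk hδ0.le, hC], ?_⟩
  intro f hf
  obtain ⟨T, hT⟩ := goodT_exists G f hf
  -- the companion real-valued function
  set g : V → ℂ := fun x => ((‖f x‖ : ℝ) : ℂ) with hgdef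
  have hgf : ∀ x, g x ≠ 0 ↔ f x ≠ 0 := by
    intro x; simp [hgdef]
  have hTg : GoodT G T g := fun x hx => hT x ((hgf x).1 hx)
  have hgsupp : (Function.support g).Finite := by
    refine hf.subset (fun x hx => ?_)
    simp only [Function.mem_support] at hx ⊢
    exact (hgf x).1 hx
  have hgnorm : ∀ x, ‖g x‖ = ‖f x‖ := by
    intro x; simp [hgdef]
  -- abbreviations
  set D : ℝ := ∑ x ∈ T, (G.degree x : ℝ) * ‖f x‖^2 with hD
  set N : ℝ := ∑ x ∈ T, ‖f x‖^2 with hN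
  set P : ℝ := ∑ x ∈ T, max (q x) 0 * ‖f x‖^2 with hP
  set M : ℝ := ∑ x ∈ T, max (-q x) 0 * ‖f x‖^2 with hM
  set s : ℝ := qLap G g with hs
  set R : ℝ := ∑ x ∈ T, ∑ y ∈ T, (if G.Adj x y then (f x * (starRingEnd ℂ) (f y)).re else 0) with hR
  set Rg : ℝ := ∑ x ∈ T, ∑ y ∈ T, (if G.Adj x y then ‖f x‖ * ‖f y‖ else 0) with hRg
  -- nonnegativity
  have hN0 : 0 ≤ N := Finset.sum_nonneg (fun x _ => by positivity)
  have hD0 : 0 ≤ D := Finset.sum_nonneg (fun x _ => by positivity)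
  have hP0 : 0 ≤ P := Finset.sum_nonneg (fun x _ => mul_nonneg (le_max_right _ _) (by positivity))
  have hM0 : 0 ≤ M := Finset.sum_nonneg (fun x _ => mul_nonneg (le_max_right _ _) (by positivity))
  have hs0 : 0 ≤ s := by
    rw [hs, qLap_eq G g hTg]
    have : 0 ≤ ∑ x ∈ T, ∑ y ∈ T, (if G.Adj x y then ‖g x - g y‖^2 else 0) :=
      Finset.sum_nonneg (fun x _ => Finset.sum_nonneg (fun y _ => by positivity))
    linarith
  -- identities
  have hgdeg : ∑ x ∈ T, (G.degree x : ℝ) * ‖g x‖^2 = D := by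
    refine Finset.sum_congr rfl (fun x _ => by rw [hgnorm])
  have hLapf : qLap G f = D - R := lap_eq_deg_sub G hT
  have hsg : s = D - Rg := by
    rw [hs, lap_eq_deg_sub G hTg, hgdeg]
    congr 1
    refine Finset.sum_congr rfl (fun x _ => Finset.sum_congr rfl (fun y _ => ?_))
    by_cases hadj : G.Adj x y
    · simp only [hadj, if_pos]
      congr 1
      rw [hgdef]
      simp [← Complex.ofReal_mul]
    · simp [hadj]
  have hRRg : |R| ≤ Rg := by
    calc |R| ≤ ∑ x ∈ T, |∑ y ∈ T, (if G.Adj x y then (f x * (starRingEnd ℂ) (f y)).re else 0)| :=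
          Finset.abs_sum_le_sum_abs _ _
      _ ≤ ∑ x ∈ T, ∑ y ∈ T, |if G.Adj x y then (f x * (starRingEnd ℂ) (f y)).re else 0| :=
          Finset.sum_le_sum (fun x _ => Finset.abs_sum_le_sum_abs _ _)
      _ ≤ Rg := by
          refine Finset.sum_le_sum (fun x _ => Finset.sum_le_sum (fun y _ => ?_))
          by_cases hadj : G.Adj x y
          · simp only [hadj, if_pos]
            calc |(f x * (starRingEnd ℂ) (f y)).re| ≤ ‖f x * (starRingEnd ℂ) (f y)‖ :=
                  Complex.abs_re_le_norm _
              _ = ‖f x‖ * ‖f y‖ := by rw [norm_mul, RCLike.norm_conj]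
          · simp [hadj]
  -- coarea applied to h = ‖f‖²
  have hhgood : GoodT G T (fun x => ‖f x‖^2) := by
    intro x hx
    refine hT x ?_
    intro h0
    simp [h0] at hx
  have hco := coarea_aux G hsp ha T (T.filter (fun x => ‖f x‖^2 ≠ 0)).card
    (fun x => ‖f x‖^2) (fun x => by positivity) hhgood (le_refl _)
  -- Young bound on the gradient-of-squares term
  have hEdif : (1+a) * (∑ x ∈ T, ∑ y ∈ T, (if G.Adj x y then |‖f x‖^2 - ‖f y‖^2| else 0))
      ≤ 2*(1+a)^2*s + D := by
    have hptsum : ∑ x ∈ T, ∑ y ∈ T, (if G.Adj x y then 2*(1+a)*|‖f x‖^2 - ‖f y‖^2| else 0)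
        ≤ ∑ x ∈ T, ∑ y ∈ T, (if G.Adj x y then
            (2*(1+a)^2*(‖f x‖ - ‖f y‖)^2 + (‖f x‖^2 + ‖f y‖^2)) else 0) := by
      refine Finset.sum_le_sum (fun x _ => Finset.sum_le_sum (fun y _ => ?_))
      by_cases hadj : G.Adj x y
      · simp only [hadj, if_pos]
        exact young_pt (1+a) (‖f x‖) (‖f y‖) (by linarith) (norm_nonneg _) (norm_nonneg _)
      · simp [hadj]
    have e1 : ∑ x ∈ T, ∑ y ∈ T, (if G.Adj x y then 2*(1+a)*|‖f x‖^2 - ‖f y‖^2| else 0)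
        = 2*(1+a) * ∑ x ∈ T, ∑ y ∈ T, (if G.Adj x y then |‖f x‖^2 - ‖f y‖^2| else 0) := by
      rw [Finset.mul_sum]
      refine Finset.sum_congr rfl (fun x _ => ?_)
      rw [Finset.mul_sum]
      refine Finset.sum_congr rfl (fun y _ => ?_)
      by_cases hadj : G.Adj x y <;> simp [hadj]
    have e2 : ∑ x ∈ T, ∑ y ∈ T, (if G.Adj x y then
          (2*(1+a)^2*(‖f x‖ - ‖f y‖)^2 + (‖f x‖^2 + ‖f y‖^2)) else 0)
        = 2*(1+a)^2 * (2*s) + 2*D := by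
      have esplit : ∀ x ∈ T, ∀ y ∈ T, (if G.Adj x y then
            (2*(1+a)^2*(‖f x‖ - ‖f y‖)^2 + (‖f x‖^2 + ‖f y‖^2)) else 0)
          = 2*(1+a)^2 * (if G.Adj x y then ‖g x - g y‖^2 else 0)
            + (if G.Adj x y then ‖f x‖^2 else 0) + (if G.Adj x y then ‖f y‖^2 else 0) := by
        intro x _ y _
        by_cases hadj : G.Adj x y
        · simp only [hadj, if_pos]
          have : ‖g x - g y‖^2 = (‖f x‖ - ‖f y‖)^2 := by
            rw [hgdef]
            rw [← Complex.ofReal_sub, Complex.norm_real]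
            exact sq_abs _
          rw [this]; ring
        · simp [hadj]
      have hq2s : ∑ x ∈ T, ∑ y ∈ T, (if G.Adj x y then ‖g x - g y‖^2 else 0) = 2*s := by
        rw [hs, qLap_eq G g hTg]; ring
      calc ∑ x ∈ T, ∑ y ∈ T, (if G.Adj x y then
            (2*(1+a)^2*(‖f x‖ - ‖f y‖)^2 + (‖f x‖^2 + ‖f y‖^2)) else 0)
          = ∑ x ∈ T, ∑ y ∈ T, (2*(1+a)^2 * (if G.Adj x y then ‖g x - g y‖^2 else 0)
            + (if G.Adj x y then ‖f x‖^2 else 0) + (if G.Adj x y then ‖f y‖^2 else 0)) :=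
            Finset.sum_congr rfl (fun x hx => Finset.sum_congr rfl (fun y hy => esplit x hx y hy))
        _ = 2*(1+a)^2 * (2*s) + 2*D := by
            simp only [Finset.sum_add_distrib, ← Finset.mul_sum]
            rw [hq2s, deg_inner_left G hT, deg_inner_right G hT, ← hD]
            ring
    rw [e1] at hptsum
    rw [e2] at hptsum
    nlinarith [hptsum]
  -- conclude D ≤ 2kN + 2(1+a)²s + 2aP
  have hA : D ≤ 2*k*N + 2*(1+a)^2*s + 2*a*P := by
    have hco' : D ≤ k*N + (1+a)*((1/2) * ∑ x ∈ T, ∑ y ∈ T,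
        (if G.Adj x y then |‖f x‖^2 - ‖f y‖^2| else 0)) + a*P := hco
    nlinarith [hEdif, hco']
  -- K_α at g
  have hB : M ≤ α * (s + P) + C * N := by
    have h := hqC g hgsupp
    rw [qPot_eq G (fun x => max (-q x) 0) g hTg, qPot_eq G (fun x => max (q x) 0) g hTg,
      qNormSq_eq G g hTg] at h
    have em : ∑ x ∈ T, max (-q x) 0 * ‖g x‖^2 = M :=
      Finset.sum_congr rfl (fun x _ => by rw [hgnorm])
    have ep : ∑ x ∈ T, max (q x) 0 * ‖g x‖^2 = P :=
      Finset.sum_congr rfl (fun x _ => by rw [hgnorm])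
    have en : ∑ x ∈ T, ‖g x‖^2 = N :=
      Finset.sum_congr rfl (fun x _ => by rw [hgnorm])
    rw [em, ep, en] at h
    exact h
  -- final algebra
  have hDegf : qDeg G f = D := qDeg_eq G f hT
  have hNf : qNormSq f = N := qNormSq_eq G f hT
  have hPqf : qPot q f = P - M := by
    rw [qPot_eq G q f hT, hP, hM, ← Finset.sum_sub_distrib]
    refine Finset.sum_congr rfl (fun x _ => ?_)
    rcases le_or_gt 0 (q x) with h | h
    · rw [max_eq_left h, max_eq_right (by linarith : -q x ≤ (0:ℝ))]; ring
    · rw [max_eq_right (le_of_lt h : q x ≤ (0:ℝ)), max_eq_left (by linarith : (0:ℝ) ≤ -q x)]; ring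
  rw [hLapf, hDegf, hNf, hPqf]
  have habs : |D - R - D| = |R| := by rw [show D - R - D = -R by ring, abs_neg]
  rw [habs]
  have hRs : |R| ≤ D - s := by
    have e : Rg = D - s := by rw [hsg]; ring
    linarith [hRRg, e]
  exact final_arith hδ0 hδhalf hδ1 hδ2 ha hk hα0 hα1 hC hN0 hP0 hs0 hA hB hRs
lemma sparse_imp_two_sided {q : V → ℝ} {α : ℝ} (hα0 : 0 < α) (hα1 : α < 1)
    (hq : KClass G q α) (hex : ∃ a k : ℝ, 0 ≤ a ∧ 0 ≤ k ∧ IsSparse G q a k) :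
    ∃ ta tk : ℝ, 0 < ta ∧ ta < 1 ∧ 0 ≤ tk ∧
      ∀ f : V → ℂ, (Function.support f).Finite →
        (1 - ta) * (qDeg G f + qPot q f) - tk * qNormSq f ≤ qLap G f + qPot q f ∧
        qLap G f + qPot q f ≤ (1 + ta) * (qDeg G f + qPot q f) + tk * qNormSq f := by
  obtain ⟨a, k, ha, hk, hsp⟩ := hex
  obtain ⟨C, hC, hqC⟩ := hq
  obtain ⟨ta, tk, h1, h2, h3, hest⟩ := sparse_imp_est G hsp ha hk hα0 hα1 hC hqC
  refine ⟨ta, tk, h1, h2, h3, fun f hf => ?_⟩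
  obtain ⟨hl, hr⟩ := abs_le.1 (hest f hf)
  constructor <;> nlinarith [hl, hr]
/-- for `q ∈ K_α`, `α ∈ (0,1)`, the following are equivalent:
(i) `(G,q)` is `(a,k)`-sparse for some `a,k ≥ 0`;
(ii) a two-sided form inequality with some `ã ∈ (0,1)`, `k̃ ≥ 0`;
(iii) the lower form inequality with some `ã ∈ (0,1)`, `k̃ ≥ 0`. -/
theorem stmt6 [Countable V] (q : V → ℝ) (α : ℝ) (hα0 : 0 < α) (hα1 : α < 1)
    (hq : KClass G q α) :
    ((∃ a k : ℝ, 0 ≤ a ∧ 0 ≤ k ∧ IsSparse G q a k) ↔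
      (∃ ta tk : ℝ, 0 < ta ∧ ta < 1 ∧ 0 ≤ tk ∧
        ∀ f : V → ℂ, (Function.support f).Finite →
          (1 - ta) * (qDeg G f + qPot q f) - tk * qNormSq f ≤ qLap G f + qPot q f ∧
          qLap G f + qPot q f ≤ (1 + ta) * (qDeg G f + qPot q f) + tk * qNormSq f)) ∧
    ((∃ ta tk : ℝ, 0 < ta ∧ ta < 1 ∧ 0 ≤ tk ∧
        ∀ f : V → ℂ, (Function.support f).Finite →
          (1 - ta) * (qDeg G f + qPot q f) - tk * qNormSq f ≤ qLap G f + qPot q f ∧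
          qLap G f + qPot q f ≤ (1 + ta) * (qDeg G f + qPot q f) + tk * qNormSq f) ↔
      (∃ ta tk : ℝ, 0 < ta ∧ ta < 1 ∧ 0 ≤ tk ∧
        ∀ f : V → ℂ, (Function.support f).Finite →
          (1 - ta) * (qDeg G f + qPot q f) - tk * qNormSq f ≤ qLap G f + qPot q f)) := by
  constructor
  · constructor
    · intro hex
      exact sparse_imp_two_sided G hα0 hα1 hq hex
    · rintro ⟨ta, tk, h1, h2, h3, hest⟩
      exact lower_imp_sparse G q h1 h2 h3 (fun f hf => (hest f hf).1)
  · constructor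
    · rintro ⟨ta, tk, h1, h2, h3, hest⟩
      exact ⟨ta, tk, h1, h2, h3, fun f hf => (hest f hf).1⟩
    · rintro ⟨ta, tk, h1, h2, h3, hest⟩
      have hsp := lower_imp_sparse G q h1 h2 h3 hest
      exact sparse_imp_two_sided G hα0 hα1 hq hsp

end
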